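/- Under the action of a Singer cyclic group S of PGL(3,q), the set of q(q+1)(q^2+q+1)/2 bi-lines of PG(2,q) splits into exactly q(q+1)/2 orbits, each of size q^2+q+1; and for each orbit b, every line l of PG(2,q) is a component of exactly two bi-lines of b. -/

import Mathlib

/-- Auxiliary combinatorial core: a map `act` of a type `α` acting regularly with
`q^2+q+1` iterates splits the 2-element subsets ("bi-lines") into orbits of size
`q^2+q+1`, there are `q(q+1)/2` orbits, and every element lies in exactly two
members of each orbit. -/
theorem biline_aux {α : Type*} [DecidableEq α] [Nonempty α]
    (q : ℕ) (hq2 : 2 ≤ q) (act : α → α)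
    (hreg : ∀ l l' : α, ∃! k : ℕ, k < q ^ 2 + q + 1 ∧ act^[k] l = l') :
    Nat.card {b : Finset α // b.card = 2} = q * (q + 1) * (q ^ 2 + q + 1) / 2 ∧
    (∀ b : Finset α, b.card = 2 →
      Nat.card {b' : Finset α | ∃ k : ℕ, b.image (act^[k]) = b'} = q ^ 2 + q + 1) ∧
    Nat.card (Set.range (fun b : {b : Finset α // b.card = 2} =>
        {b' : Finset α | ∃ k : ℕ, (b : Finset α).image (act^[k]) = b'})) = q * (q + 1) / 2 ∧
    (∀ b : Finset α, b.card = 2 → ∀ l : α,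
      Nat.card {b' : Finset α | (∃ k : ℕ, b.image (act^[k]) = b') ∧ l ∈ b'} = 2) := by
  classical
  set N := q ^ 2 + q + 1 with hNdef
  have hN1 : 1 < N := by nlinarith
  have hN0 : 0 < N := by omega
  have hNodd : Odd N := by
    obtain ⟨m, hm⟩ := Nat.even_mul_succ_self q
    refine ⟨m, ?_⟩
    have : q ^ 2 + q = q * (q + 1) := by ring
    omega
  -- base point and the bijection `Fin N ≃ α`
  obtain ⟨l₀⟩ := ‹Nonempty α›
  have e : Fin N ≃ α := by
    refine Equiv.ofBijective (fun k : Fin N => act^[k.1] l₀) ⟨?_, ?_⟩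
    · intro i j hij
      obtain ⟨k, -, huniq⟩ := hreg l₀ (act^[i.1] l₀)
      have h1 := huniq i.1 ⟨i.2, rfl⟩
      have h2 := huniq j.1 ⟨j.2, hij.symm⟩
      exact Fin.ext (h1.trans h2.symm)
    · intro l'
      obtain ⟨k, ⟨hk, hl⟩, -⟩ := hreg l₀ l'
      exact ⟨⟨k, hk⟩, hl⟩
  have hfin : Finite α := Finite.of_equiv _ e
  have hcard : Nat.card α = N := by
    rw [← Nat.card_congr e, Nat.card_eq_fintype_card, Fintype.card_fin]
  have hnt : Nontrivial α := by
    have : Nontrivial (Fin N) := Fin.nontrivial_iff_two_le.mpr hN1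
    exact e.symm.nontrivial
  -- `act` is injective
  have hinj : Function.Injective act := by
    have hs : Function.Surjective act := by
      intro l'
      obtain ⟨l'', hne⟩ := exists_ne l'
      obtain ⟨k, ⟨hk, hl⟩, -⟩ := hreg l'' l'
      match k, hl with
      | 0, hl => exact absurd hl hne
      | k + 1, hl => exact ⟨act^[k] l'', by rw [← Function.iterate_succ_apply' act k l'']; exact hl⟩
    exact (Finite.surjective_iff_bijective.mp hs).1
  -- periodicity
  have hper : ∀ l, act^[N] l = l := by
    intro l
    obtain ⟨k, ⟨hk, hkl⟩, huniq⟩ := hreg l l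
    have hk0 : k = 0 := (huniq 0 ⟨hN0, rfl⟩).symm
    obtain ⟨m, ⟨hm, hml⟩, -⟩ := hreg l (act^[N] l)
    have h1 : act^[m] (act^[N - m] l) = act^[m] l := by
      rw [← Function.iterate_add_apply, show m + (N - m) = N by omega]
      exact hml.symm
    have h2 : act^[N - m] l = l := hinj.iterate m h1
    have hm0 : m = 0 := by
      by_contra hm0
      have := huniq (N - m) ⟨by omega, h2⟩
      omega
    subst hm0
    exact hml.symm
  have hmod : ∀ (k : ℕ) (l : α), act^[k] l = act^[k % N] l := by
    intro k l
    conv_lhs => rw [← Nat.mod_add_div k N]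
    rw [Function.iterate_add_apply, Function.iterate_mul,
      Function.iterate_fixed (hper l) (k / N)]
  have hfree : ∀ (l : α) (k : ℕ), k < N → act^[k] l = l → k = 0 := by
    intro l k hk h
    obtain ⟨k₀, -, huniq⟩ := hreg l l
    have h1 := huniq k ⟨hk, h⟩
    have h2 := huniq 0 ⟨hN0, rfl⟩
    omega
  have hfreemod : ∀ (l : α) (k : ℕ), act^[k] l = l → k % N = 0 := by
    intro l k h
    exact hfree l (k % N) (Nat.mod_lt _ hN0) (by rw [← hmod]; exact h)
  have himg2 : ∀ (b : Finset α) (k : ℕ), (b.image act^[k]).card = b.card := by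
    intro b k
    exact Finset.card_image_of_injective b (hinj.iterate k)
  have himgmod : ∀ (b : Finset α) (k : ℕ), b.image act^[k] = b.image act^[k % N] := by
    intro b k
    exact Finset.image_congr fun z _ => hmod k z
  -- key freeness on bi-lines
  have hBaux : ∀ b : Finset α, b.card = 2 → ∀ d, d < N → b.image act^[d] = b → d = 0 := by
    intro b hb d hd heq
    obtain ⟨x, y, hxy, rfl⟩ := Finset.card_eq_two.mp hb
    have hx : act^[d] x ∈ ({x, y} : Finset α) := by
      have : act^[d] x ∈ Finset.image act^[d] {x, y} := Finset.mem_image_of_mem _ (by simp)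
      rwa [heq] at this
    rcases Finset.mem_insert.mp hx with h1 | h1
    · exact hfree x d hd h1
    · have h1' : act^[d] x = y := by simpa using h1
      have hy : act^[d] y ∈ ({x, y} : Finset α) := by
        have : act^[d] y ∈ Finset.image act^[d] {x, y} := Finset.mem_image_of_mem _ (by simp)
        rwa [heq] at this
      rcases Finset.mem_insert.mp hy with h2 | h2
      · -- act^[d] y = x, so act^[2d] x = x and N odd forces d = 0
        have h3 : act^[d + d] x = x := by
          rw [Function.iterate_add_apply, h1', h2]
        have h4 : N ∣ 2 * d := Nat.dvd_of_mod_eq_zero (by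
          rw [two_mul]
          exact hfreemod x (d + d) h3)
        have h6 : N ∣ d :=
          Nat.Coprime.dvd_of_dvd_mul_left (Nat.coprime_two_right.mpr hNodd) h4
        exact Nat.eq_zero_of_dvd_of_lt h6 hd
      · have h2' : act^[d] y = y := by simpa using h2
        exact hfree y d hd h2'
  have hB' : ∀ b : Finset α, b.card = 2 → ∀ i j, i ≤ j → j < N →
      b.image act^[i] = b.image act^[j] → i = j := by
    intro b hb i j hij hj h
    have key : (b.image act^[i]).image act^[j - i] = b.image act^[i] := by
      rw [Finset.image_image, ← Function.iterate_add, show j - i + i = j by omega]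
      exact h.symm
    have := hBaux (b.image act^[i]) (by rw [himg2, hb]) (j - i) (by omega) key
    omega
  have hB : ∀ b : Finset α, b.card = 2 → ∀ i j, i < N → j < N →
      b.image act^[i] = b.image act^[j] → i = j := by
    intro b hb i j hi hj h
    rcases le_total i j with hle | hle
    · exact hB' b hb i j hle hj h
    · exact (hB' b hb j i hle hi h.symm).symm
  -- orbit description
  have horbdesc : ∀ b : Finset α,
      {b' : Finset α | ∃ k : ℕ, b.image (act^[k]) = b'} =
        (fun k => b.image act^[k]) '' Set.Iio N := by
    intro b
    ext b'
    constructor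
    · rintro ⟨k, rfl⟩
      exact ⟨k % N, Nat.mod_lt _ hN0, (himgmod b k).symm⟩
    · rintro ⟨k, -, h⟩
      exact ⟨k, h⟩
  -- each orbit has size N
  have horbcard : ∀ b : Finset α, b.card = 2 →
      Nat.card {b' : Finset α | ∃ k : ℕ, b.image (act^[k]) = b'} = N := by
    intro b hb
    have hio : Set.InjOn (fun k => Finset.image act^[k] b) (Set.Iio N) :=
      fun i hi j hj h => hB b hb i j hi hj h
    rw [Nat.card_coe_set_eq, horbdesc, Set.ncard_image_of_injOn hio,
      ← Finset.coe_range, Set.ncard_coe_finset, Finset.card_range]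
  letI : Fintype α := Fintype.ofFinite α
  have hPc : Fintype.card α = N := by rw [← Nat.card_eq_fintype_card, hcard]
  -- total number of bi-lines
  have goal1 : Nat.card {b : Finset α // b.card = 2} = q * (q + 1) * N / 2 := by
    rw [Nat.card_eq_fintype_card, Fintype.card_finset_len, hPc, Nat.choose_two_right]
    congr 1
    have h1 : N - 1 = q ^ 2 + q := by omega
    rw [h1, hNdef]
    ring
  -- Finset version of orbits
  set orbitF : Finset α → Finset (Finset α) :=
    fun b => (Finset.range N).image (fun k => b.image act^[k]) with horbF_def
  have horbF : ∀ b : Finset α,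
      {b' : Finset α | ∃ k : ℕ, b.image (act^[k]) = b'} = ↑(orbitF b) := by
    intro b
    rw [horbdesc, horbF_def, Finset.coe_image, Finset.coe_range]
  have horbFcard : ∀ b : Finset α, b.card = 2 → (orbitF b).card = N := by
    intro b hb
    have := horbcard b hb
    rw [horbF b, Nat.card_coe_set_eq, Set.ncard_coe_finset] at this
    exact this
  have horbFmem : ∀ b : Finset α, b ∈ orbitF b := by
    intro b
    rw [horbF_def]
    exact Finset.mem_image.mpr ⟨0, Finset.mem_range.mpr hN0, by simp⟩
  -- transitivity: orbits of elements in the same orbit agree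
  have hinv : ∀ (b : Finset α) (k : ℕ), ∃ m, (b.image act^[k]).image act^[m] = b := by
    intro b k
    refine ⟨N - k % N, ?_⟩
    rw [Finset.image_image, ← Function.iterate_add]
    have hr : k % N < N := Nat.mod_lt _ hN0
    have hkd : k % N + N * (k / N) = k := Nat.mod_add_div k N
    have h1 : N - k % N + k = N * (1 + k / N) := by
      have : N * (1 + k / N) = N + N * (k / N) := by ring
      omega
    rw [h1]
    have : b.image act^[N * (1 + k / N)] = b.image act^[0] :=
      Finset.image_congr fun z _ => by
        rw [Function.iterate_mul, Function.iterate_fixed (hper z)]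
        simp
    simpa using this
  have horbtransF : ∀ b c : Finset α, (∃ k : ℕ, b.image act^[k] = c) →
      orbitF c = orbitF b := by
    rintro b c ⟨k, rfl⟩
    obtain ⟨m, hm⟩ := hinv b k
    apply Finset.coe_injective
    rw [← horbF, ← horbF]
    ext b'
    simp only [Set.mem_setOf_eq]
    constructor
    · rintro ⟨j, rfl⟩
      exact ⟨j + k, by rw [Finset.image_image, ← Function.iterate_add]⟩
    · rintro ⟨j, rfl⟩
      refine ⟨j + m, ?_⟩
      rw [Function.iterate_add, ← Finset.image_image, hm]
  -- counting orbits
  have goal3 :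
      Nat.card (Set.range (fun b : {b : Finset α // b.card = 2} =>
        {b' : Finset α | ∃ k : ℕ, (b : Finset α).image (act^[k]) = b'})) = q * (q + 1) / 2 := by
    set T := {b : Finset α // b.card = 2} with hT
    set g : T → Finset (Finset α) := fun t => orbitF (t : Finset α) with hg
    have hfibcard : ∀ t : T, (Finset.univ.filter (fun t' : T => g t' = g t)).card = N := by
      intro t
      rw [← horbFcard (t : Finset α) t.2]
      refine Finset.card_bij (fun t' _ => (t' : Finset α)) ?_ ?_ ?_
      · intro t' ht'
        have h : orbitF (t' : Finset α) = orbitF (t : Finset α) := (Finset.mem_filter.mp ht').2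
        show (t' : Finset α) ∈ orbitF (t : Finset α)
        rw [← h]
        exact horbFmem _
      · intro t₁ h₁ t₂ h₂ h
        exact Subtype.ext h
      · intro b' hb'
        have hb'2 : b'.card = 2 := by
          rw [horbF_def] at hb'
          obtain ⟨k, -, rfl⟩ := Finset.mem_image.mp hb'
          rw [himg2, t.2]
        refine ⟨⟨b', hb'2⟩, ?_, rfl⟩
        rw [Finset.mem_filter]
        refine ⟨Finset.mem_univ _, ?_⟩
        show orbitF b' = orbitF (t : Finset α)
        apply horbtransF
        rw [horbF_def] at hb'
        obtain ⟨k, -, hk⟩ := Finset.mem_image.mp hb'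
        exact ⟨k, hk⟩
    have hsum : Fintype.card T = (Finset.univ.image g).card * N := by
      rw [← Finset.card_univ,
        Finset.card_eq_sum_card_fiberwise
          (fun t (_ : t ∈ Finset.univ) => Finset.mem_image_of_mem g (Finset.mem_univ t))]
      rw [Finset.sum_congr rfl (fun o ho => ?_), Finset.sum_const, smul_eq_mul]
      obtain ⟨t, -, rfl⟩ := Finset.mem_image.mp ho
      exact hfibcard t
    have hTc : Fintype.card T = q * (q + 1) * N / 2 := by
      rw [← Nat.card_eq_fintype_card]
      exact goal1
    obtain ⟨m, hm⟩ := Nat.even_mul_succ_self q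
    have hqm : q * (q + 1) = 2 * m := by omega
    have himgc : (Finset.univ.image g).card = m := by
      have h1 : q * (q + 1) * N / 2 = m * N := by
        rw [hqm, mul_assoc, Nat.mul_div_cancel_left _ (by norm_num : (0:ℕ) < 2)]
      have h2 : (Finset.univ.image g).card * N = m * N := by
        rw [← hsum, hTc, h1]
      exact Nat.eq_of_mul_eq_mul_right hN0 h2
    have hrange : Set.range (fun b : T =>
        {b' : Finset α | ∃ k : ℕ, (b : Finset α).image (act^[k]) = b'}) =
        ((↑) : Finset (Finset α) → Set (Finset α)) '' ↑(Finset.univ.image g) := by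
      ext s
      constructor
      · rintro ⟨t, rfl⟩
        exact ⟨g t, by simp [Finset.mem_image], (horbF (t : Finset α)).symm⟩
      · rintro ⟨o, ho, rfl⟩
        rw [Finset.mem_coe, Finset.mem_image] at ho
        obtain ⟨t, -, rfl⟩ := ho
        exact ⟨t, horbF _⟩
    rw [Nat.card_coe_set_eq, hrange,
      Set.ncard_image_of_injOn (Set.injOn_of_injective Finset.coe_injective),
      Set.ncard_coe_finset, himgc]
    omega
  -- every point in exactly two bi-lines of an orbit
  have goal4 : ∀ b : Finset α, b.card = 2 → ∀ l : α,
      Nat.card {b' : Finset α | (∃ k : ℕ, b.image (act^[k]) = b') ∧ l ∈ b'} = 2 := by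
    intro b hb l
    obtain ⟨x, y, hxy, rfl⟩ := Finset.card_eq_two.mp hb
    set b : Finset α := {x, y} with hbdef
    obtain ⟨k₁, ⟨hk₁, hx⟩, hux⟩ := hreg x l
    obtain ⟨k₂, ⟨hk₂, hy⟩, huy⟩ := hreg y l
    have hkk : k₁ ≠ k₂ := by
      intro h
      apply hxy
      apply hinj.iterate k₁
      rw [hx, h, hy]
    have hset : {b' : Finset α | (∃ k : ℕ, b.image (act^[k]) = b') ∧ l ∈ b'} =
        {b.image act^[k₁], b.image act^[k₂]} := by
      ext b'
      simp only [Set.mem_setOf_eq, Set.mem_insert_iff, Set.mem_singleton_iff]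
      constructor
      · rintro ⟨⟨k, rfl⟩, hl⟩
        rw [himgmod b k] at hl ⊢
        obtain ⟨z, hz, hzl⟩ := Finset.mem_image.mp hl
        have hz' : z = x ∨ z = y := by simpa [hbdef] using hz
        rcases hz' with rfl | rfl
        · left
          rw [hux (k % N) ⟨Nat.mod_lt _ hN0, hzl⟩]
        · right
          rw [huy (k % N) ⟨Nat.mod_lt _ hN0, hzl⟩]
      · rintro (rfl | rfl)
        · exact ⟨⟨k₁, rfl⟩, Finset.mem_image.mpr ⟨x, by simp [hbdef], hx⟩⟩
        · exact ⟨⟨k₂, rfl⟩, Finset.mem_image.mpr ⟨y, by simp [hbdef], hy⟩⟩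
    rw [Nat.card_coe_set_eq, hset]
    apply Set.ncard_pair
    intro h
    exact hkk (hB b hb k₁ k₂ hk₁ hk₂ h)
  exact ⟨goal1, fun b hb => horbcard b hb, goal3, goal4⟩

/-- Under a Singer cyclic group `S` of PGL(3,q) — here generated by a single
projectivity `act` of the set of lines of PG(2,q) (lines being, by duality,
points of the projectivization of the dual space), given by a matrix
`M ∈ GL(3,q)` and acting regularly with the `q^2+q+1` iterates
`act^[0], …, act^[q^2+q]` — the `q(q+1)(q^2+q+1)/2` bi-lines of PG(2,q)
split into exactly `q(q+1)/2` orbits, each of size `q^2+q+1`, and for each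
orbit `b` every line of PG(2,q) is a component of exactly two bi-lines
of `b`. -/
theorem singer_orbits_on_bilines (F : Type*) [Field F] [Fintype F]
    [DecidableEq (Projectivization F (Fin 3 → F))]
    (q : ℕ) (hq : Fintype.card F = q)
    (M : GL (Fin 3) F)
    (act : Projectivization F (Fin 3 → F) → Projectivization F (Fin 3 → F))
    (hact : ∀ (v : Fin 3 → F) (hv : v ≠ 0) (hv' : M.val.mulVec v ≠ 0),
      act (Projectivization.mk F v hv) = Projectivization.mk F (M.val.mulVec v) hv')
    (hreg : ∀ l l' : Projectivization F (Fin 3 → F),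
      ∃! k : ℕ, k < q ^ 2 + q + 1 ∧ act^[k] l = l') :
    Nat.card {b : Finset (Projectivization F (Fin 3 → F)) // b.card = 2} =
      q * (q + 1) * (q ^ 2 + q + 1) / 2 ∧
    (∀ b : Finset (Projectivization F (Fin 3 → F)), b.card = 2 →
      Nat.card {b' : Finset (Projectivization F (Fin 3 → F)) |
        ∃ k : ℕ, b.image (act^[k]) = b'} = q ^ 2 + q + 1) ∧
    Nat.card (Set.range
      (fun b : {b : Finset (Projectivization F (Fin 3 → F)) // b.card = 2} =>
        {b' : Finset (Projectivization F (Fin 3 → F)) |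
          ∃ k : ℕ, (b : Finset (Projectivization F (Fin 3 → F))).image (act^[k]) = b'})) =
      q * (q + 1) / 2 ∧
    (∀ b : Finset (Projectivization F (Fin 3 → F)), b.card = 2 →
      ∀ l : Projectivization F (Fin 3 → F),
        Nat.card {b' : Finset (Projectivization F (Fin 3 → F)) |
          (∃ k : ℕ, b.image (act^[k]) = b') ∧ l ∈ b'} = 2) := by
  have hq2 : 2 ≤ q := hq ▸ Fintype.one_lt_card
  exact biline_aux q hq2 act hreg
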